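/- Let P = (Q,T) be a parameterized system with initial local state q₀, let F ⊆ Q* be a finite set of generators with B = {c ∈ Q* : ∃w ∈ F, w ⪯ c} the set of bad configurations, and let Φ_P and Ψ_F be the first-order encodings. If Ψ_F is not a semantic consequence of Φ_P (i.e. some first-order structure satisfies Φ_P and ¬Ψ_F), then no bad configuration is reachable from any initial configuration: for all n and all c ∈ B, it is not the case that q₀^n →*_P c. -/

import Mathlib

/-- Guards of conditional transition rules: `∀_I J` or `∃_I J` with `I ∈ {L, R, LR}`. -/
inductive Guard (Q : Type) : Type
  | forallL (J : Set Q)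
  | forallR (J : Set Q)
  | forallLR (J : Set Q)
  | existsL (J : Set Q)
  | existsR (J : Set Q)
  | existsLR (J : Set Q)

/-- A transition rule of a parameterized system: an optional guard, a source
local state and a target local state. -/
structure Rule (Q : Type) : Type where
  guard : Option (Guard Q)
  src : Q
  tgt : Q

/-- Satisfaction of a guard at a position whose strict left context is `u` and
strict right context is `v`. -/
def GuardSat {Q : Type} (g : Guard Q) (u v : List Q) : Prop :=
  match g with
  | .forallL J => ∀ q ∈ u, q ∈ J
  | .forallR J => ∀ q ∈ v, q ∈ J
  | .forallLR J => (∀ q ∈ u, q ∈ J) ∧ (∀ q ∈ v, q ∈ J)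
  | .existsL J => ∃ q ∈ u, q ∈ J
  | .existsR J => ∃ q ∈ v, q ∈ J
  | .existsLR J => (∃ q ∈ u, q ∈ J) ∨ (∃ q ∈ v, q ∈ J)

/-- One-step transition relation `→_P` of the parameterized system with rules `T`. -/
def Step {Q : Type} (T : Set (Rule Q)) (c c' : List Q) : Prop :=
  ∃ r ∈ T, ∃ u v : List Q,
    c = u ++ r.src :: v ∧ c' = u ++ r.tgt :: v ∧
      ∀ g, r.guard = some g → GuardSat g u v

/-- Reachability `→*_P`: the reflexive-transitive closure of `→_P`. -/
def Reach {Q : Type} (T : Set (Rule Q)) : List Q → List Q → Prop :=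
  Relation.ReflTransGen (Step T)

/-- Interpretation `[t_c]` of the closed term `t_c = c₁ * ⋯ * cₙ` (with `t_ε = e`)
in a structure with domain `M`, binary operation `mul`, constants `e` and `cq q`. -/
def wordVal {Q M : Type} (mul : M → M → M) (e : M) (cq : Q → M) : List Q → M
  | [] => e
  | [q] => cq q
  | q :: q' :: rest => mul (cq q) (wordVal mul e cq (q' :: rest))

/-- The set `J` of a universal guard (if any). -/
def univGuardSet {Q : Type} (g : Guard Q) : Option (Set Q) :=
  match g with
  | .forallL J => some J
  | .forallR J => some J
  | .forallLR J => some J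
  | _ => none

/-- The (universal closure of the) axiom of `Φ_P` corresponding to a single
transition rule, interpreted in a first-order structure with domain `M`. -/
def RuleAx {Q M : Type} (mul : M → M → M) (cq : Q → M)
    (R : M → Prop) (PJ : Set Q → M → Prop) (r : Rule Q) : Prop :=
  match r.guard with
  | none =>
      ∀ x y, R (mul (mul x (cq r.src)) y) → R (mul (mul x (cq r.tgt)) y)
  | some (.forallL J) =>
      ∀ x y, R (mul (mul x (cq r.src)) y) ∧ PJ J x → R (mul (mul x (cq r.tgt)) y)
  | some (.forallR J) =>
      ∀ x y, R (mul (mul x (cq r.src)) y) ∧ PJ J y → R (mul (mul x (cq r.tgt)) y)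
  | some (.forallLR J) =>
      ∀ x y, R (mul (mul x (cq r.src)) y) ∧ PJ J x ∧ PJ J y →
        R (mul (mul x (cq r.tgt)) y)
  | some (.existsL J) =>
      ∀ q ∈ J, ∀ x y z w,
        R (mul (mul x (cq r.src)) y) ∧ x = mul (mul z (cq q)) w →
          R (mul (mul x (cq r.tgt)) y)
  | some (.existsR J) =>
      ∀ q ∈ J, ∀ x y z w,
        R (mul (mul x (cq r.src)) y) ∧ y = mul (mul z (cq q)) w →
          R (mul (mul x (cq r.tgt)) y)
  | some (.existsLR J) =>
      ∀ q ∈ J, ∀ x y z w,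
        R (mul (mul x (cq r.src)) y) ∧
            (x = mul (mul z (cq q)) w ∨ y = mul (mul z (cq q)) w) →
          R (mul (mul x (cq r.tgt)) y)

/-- A first-order structure (domain `M`, operation `mul`, constants `e`, `cq q`,
predicates `In`, `R`, `P^J`) satisfies all formulas of the encoding `Φ_P` of the
parameterized system with rules `T` and initial local state `q0`. -/
def SatPhi {Q M : Type} (T : Set (Rule Q)) (q0 : Q)
    (mul : M → M → M) (e : M) (cq : Q → M)
    (In R : M → Prop) (PJ : Set Q → M → Prop) : Prop :=
  (∀ x y z : M, mul (mul x y) z = mul x (mul y z)) ∧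
  (∀ x : M, mul e x = x) ∧
  (∀ x : M, mul x e = x) ∧
  In e ∧
  (∀ x, In x → In (mul x (cq q0))) ∧
  (∀ x, In x → R x) ∧
  (∀ J : Set Q, (∃ r ∈ T, ∃ g, r.guard = some g ∧ univGuardSet g = some J) →
      PJ J e ∧ ∀ q ∈ J, ∀ x, PJ J x → PJ J (mul x (cq q))) ∧
  (∀ r ∈ T, RuleAx mul cq R PJ r)

/-- Value of the term `x₀ * w₁ * x₁ * ⋯ * wₙ * xₙ` under an assignment: `x0` is
the value of `x₀` and `xs` the values of `x₁, …, xₙ`. -/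
def psiVal {Q M : Type} (mul : M → M → M) (cq : Q → M) :
    M → List Q → List M → M
  | x, [], _ => x
  | x, _ :: _, [] => x
  | x, q :: ws, y :: ys => psiVal mul cq (mul (mul x (cq q)) y) ws ys

/-- The sentence `Ψ_F` (the existential closure of `⋁_{w ∈ F} ψ_w`, where
`ψ_w = R(x₀ * w₁ * x₁ * ⋯ * wₙ * xₙ)`) holds in the given structure. -/
def SatPsiF {Q M : Type} (mul : M → M → M) (cq : Q → M) (R : M → Prop)
    (F : Set (List Q)) : Prop :=
  ∃ w ∈ F, ∃ x0 : M, ∃ xs : List M, xs.length = w.length ∧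
    R (psiVal mul cq x0 w xs)

section Aux
variable {Q M : Type} (mul : M → M → M) (e : M) (cq : Q → M)

theorem wordVal_cons (idr : ∀ x, mul x e = x) (q : Q) (l : List Q) :
    wordVal mul e cq (q :: l) = mul (cq q) (wordVal mul e cq l) := by
  cases l with
  | nil => simp [wordVal, idr]
  | cons a t => rfl

theorem wordVal_append
    (assoc : ∀ x y z : M, mul (mul x y) z = mul x (mul y z))
    (idl : ∀ x, mul e x = x) (idr : ∀ x, mul x e = x) (a b : List Q) :
    wordVal mul e cq (a ++ b) = mul (wordVal mul e cq a) (wordVal mul e cq b) := by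
  induction a with
  | nil => simp [wordVal, idl]
  | cons q t ih =>
      rw [List.cons_append, wordVal_cons mul e cq idr, ih,
        wordVal_cons mul e cq idr, assoc]

theorem psiVal_mul
    (assoc : ∀ x y z : M, mul (mul x y) z = mul x (mul y z))
    (m : M) (w : List Q) : ∀ (x : M) (ys : List M),
    psiVal mul cq (mul m x) w ys = mul m (psiVal mul cq x w ys) := by
  induction w with
  | nil => intro x ys; rfl
  | cons q ws ih =>
      intro x ys
      cases ys with
      | nil => rfl
      | cons y ys' =>
          show psiVal mul cq (mul (mul (mul m x) (cq q)) y) ws ys'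
              = mul m (psiVal mul cq (mul (mul x (cq q)) y) ws ys')
          rw [assoc m x (cq q), assoc m (mul x (cq q)) y, ih]

theorem sublist_psi
    (assoc : ∀ x y z : M, mul (mul x y) z = mul x (mul y z))
    (idl : ∀ x, mul e x = x) (idr : ∀ x, mul x e = x)
    {w c : List Q} (h : w.Sublist c) :
    ∃ (x0 : M) (xs : List M), xs.length = w.length ∧
      wordVal mul e cq c = psiVal mul cq x0 w xs := by
  induction h with
  | slnil => exact ⟨e, [], rfl, rfl⟩
  | cons a h ih =>
      obtain ⟨x0, xs, hlen, hval⟩ := ih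
      refine ⟨mul (cq a) x0, xs, hlen, ?_⟩
      rw [wordVal_cons mul e cq idr, hval, psiVal_mul mul cq assoc]
  | cons_cons a h ih =>
      obtain ⟨x0, xs, hlen, hval⟩ := ih
      refine ⟨e, x0 :: xs, by simp [hlen], ?_⟩
      show wordVal mul e cq (a :: _) = psiVal mul cq (mul (mul e (cq a)) x0) _ xs
      rw [wordVal_cons mul e cq idr, hval, idl, psiVal_mul mul cq assoc]

theorem PJ_val (PJ : M → Prop) (J : Set Q) (hPe : PJ e)
    (hPc : ∀ q ∈ J, ∀ x, PJ x → PJ (mul x (cq q)))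
    (assoc : ∀ x y z : M, mul (mul x y) z = mul x (mul y z))
    (idl : ∀ x, mul e x = x) (idr : ∀ x, mul x e = x) :
    ∀ u : List Q, (∀ q ∈ u, q ∈ J) → PJ (wordVal mul e cq u) := by
  intro u
  induction u using List.reverseRecOn with
  | nil => intro _; exact hPe
  | append_singleton t q ih =>
      intro hall
      rw [wordVal_append mul e cq assoc idl idr]
      have hq : q ∈ J := hall q (by simp)
      have : wordVal mul e cq [q] = cq q := rfl
      rw [this]
      exact hPc q hq _ (ih fun x hx => hall x (by simp [hx]))

theorem exists_val_decomp
    (assoc : ∀ x y z : M, mul (mul x y) z = mul x (mul y z))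
    (idl : ∀ x, mul e x = x) (idr : ∀ x, mul x e = x)
    {q : Q} {u : List Q} (h : q ∈ u) :
    ∃ z w : M, wordVal mul e cq u = mul (mul z (cq q)) w := by
  obtain ⟨s, t, rfl⟩ := List.append_of_mem h
  refine ⟨wordVal mul e cq s, wordVal mul e cq t, ?_⟩
  rw [wordVal_append mul e cq assoc idl idr, wordVal_cons mul e cq idr, ← assoc]

end Aux

/-- correctness of the method: if some first-order structure
satisfies `Φ_P` together with `¬Ψ_F`, then no bad configuration (a configuration
containing some `w ∈ F` as a subword) is reachable from any initial
configuration `q0^n`. -/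
theorem correctness_of_method {Q : Type} [Finite Q]
    (T : Set (Rule Q)) (hT : T.Finite) (q0 : Q)
    (F : Set (List Q)) (hF : F.Finite)
    (hmodel : ∃ (M : Type) (mul : M → M → M) (e : M) (cq : Q → M)
      (In R : M → Prop) (PJ : Set Q → M → Prop),
        SatPhi T q0 mul e cq In R PJ ∧ ¬ SatPsiF mul cq R F) :
    ∀ (n : ℕ) (c : List Q), (∃ w ∈ F, w.Sublist c) →
      ¬ Reach T (List.replicate n q0) c := by
  intro n c ⟨w, hwF, hwc⟩ hreach
  obtain ⟨M, mul, e, cq, In, R, PJ, hphi, hnpsi⟩ := hmodel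
  obtain ⟨assoc, idl, idr, hIne, hInq, hInR, hPJax, hrules⟩ := hphi
  -- reachable configurations have R-value
  have hRc : R (wordVal mul e cq c) := by
    have hinit : ∀ m : ℕ, In (wordVal mul e cq (List.replicate m q0)) := by
      intro m
      induction m with
      | zero => exact hIne
      | succ m ih =>
          rw [List.replicate_succ', wordVal_append mul e cq assoc idl idr]
          have : wordVal mul e cq [q0] = cq q0 := rfl
          rw [this]
          exact hInq _ ih
    have hstep : ∀ a b : List Q, Step T a b →
        R (wordVal mul e cq a) → R (wordVal mul e cq b) := by
      intro a b hs hRa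
      obtain ⟨r, hrT, u, v, ha, hb, hg⟩ := hs
      have hvalsplit : ∀ p : Q,
          wordVal mul e cq (u ++ p :: v)
            = mul (mul (wordVal mul e cq u) (cq p)) (wordVal mul e cq v) := by
        intro p
        rw [wordVal_append mul e cq assoc idl idr, wordVal_cons mul e cq idr, ← assoc]
      rw [ha, hvalsplit] at hRa
      rw [hb, hvalsplit]
      have hax := hrules r hrT
      unfold RuleAx at hax
      match hguard : r.guard with
      | none =>
          rw [hguard] at hax
          exact hax _ _ hRa
      | some (.forallL J) =>
          rw [hguard] at hax
          have hgs := hg _ hguard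
          obtain ⟨hPe, hPc⟩ := hPJax J ⟨r, hrT, .forallL J, hguard, rfl⟩
          exact hax _ _ ⟨hRa, PJ_val mul e cq (PJ J) J hPe hPc assoc idl idr u hgs⟩
      | some (.forallR J) =>
          rw [hguard] at hax
          have hgs := hg _ hguard
          obtain ⟨hPe, hPc⟩ := hPJax J ⟨r, hrT, .forallR J, hguard, rfl⟩
          exact hax _ _ ⟨hRa, PJ_val mul e cq (PJ J) J hPe hPc assoc idl idr v hgs⟩
      | some (.forallLR J) =>
          rw [hguard] at hax
          have hgs := hg _ hguard
          obtain ⟨hPe, hPc⟩ := hPJax J ⟨r, hrT, .forallLR J, hguard, rfl⟩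
          exact hax _ _ ⟨hRa,
            PJ_val mul e cq (PJ J) J hPe hPc assoc idl idr u hgs.1,
            PJ_val mul e cq (PJ J) J hPe hPc assoc idl idr v hgs.2⟩
      | some (.existsL J) =>
          rw [hguard] at hax
          obtain ⟨q, hqu, hqJ⟩ := hg _ hguard
          obtain ⟨z, wv, hz⟩ := exists_val_decomp mul e cq assoc idl idr hqu
          exact hax q hqJ _ _ z wv ⟨hRa, hz⟩
      | some (.existsR J) =>
          rw [hguard] at hax
          obtain ⟨q, hqv, hqJ⟩ := hg _ hguard
          obtain ⟨z, wv, hz⟩ := exists_val_decomp mul e cq assoc idl idr hqv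
          exact hax q hqJ _ _ z wv ⟨hRa, hz⟩
      | some (.existsLR J) =>
          rw [hguard] at hax
          rcases hg _ hguard with ⟨q, hqu, hqJ⟩ | ⟨q, hqv, hqJ⟩
          · obtain ⟨z, wv, hz⟩ := exists_val_decomp mul e cq assoc idl idr hqu
            exact hax q hqJ _ _ z wv ⟨hRa, Or.inl hz⟩
          · obtain ⟨z, wv, hz⟩ := exists_val_decomp mul e cq assoc idl idr hqv
            exact hax q hqJ _ _ z wv ⟨hRa, Or.inr hz⟩
    have : ∀ b : List Q, Reach T (List.replicate n q0) b → R (wordVal mul e cq b) := by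
      intro b hb
      induction hb with
      | refl => exact hInR _ (hinit n)
      | tail _ hs ih => exact hstep _ _ hs ih
    exact this c hreach
  -- build a witness for Psi_F, contradiction
  obtain ⟨x0, xs, hlen, hval⟩ := sublist_psi mul e cq assoc idl idr (w := w) (c := c) hwc
  exact hnpsi ⟨w, hwF, x0, xs, hlen, hval ▸ hRc⟩
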